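/- arXiv:1305.7501 — 2 statements merged into one kernel-verified Lean document; each statement's English description precedes it below -/
import Mathlib

section
/- Let (N,σ) be an ordered abelian group with order-automorphism σ containing ℚ with σ restricting to multiplication by a rational q > 1 on ℚ, and fix a rational r with 1 < r < q and a positive rational a. Set a_i = q^i a. If y₀ ∈ N satisfies a₀ < y₀ and σ(y₀) = r·y₀ (meaning σ(y₀) equals the unique element with denominator-scaling by r, i.e., in the divisible hull), then y₀ > a_L for every L ∈ ℕ. -/
/-- In a divisible ordered abelian group N with order-automorphism σ, with
1 < r < q in ℚ, a > 0 with σ(q^i • a) = q^(i+1) • a for all i, any y₀ > a with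
σ y₀ = r • y₀ lies above q^L • a for every L. -/
theorem stmt_6 {N : Type*} [AddCommGroup N] [LinearOrder N] [IsOrderedAddMonoid N] [Module ℚ N] [PosSMulStrictMono ℚ N] [PosSMulReflectLT ℚ N]
    (σ : N ≃+ N) (hσ : StrictMono σ)
    (q r : ℚ) (hr : 1 < r) (hrq : r < q)
    (a : N) (ha : 0 < a)
    (hqa : ∀ i : ℕ, σ (q ^ i • a) = q ^ (i + 1) • a)
    (y₀ : N) (hy₀ : a < y₀) (hσy : σ y₀ = r • y₀) :
    ∀ L : ℕ, q ^ L • a < y₀ := by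
  intro L
  have hr0 : (0:ℚ) < r := lt_trans one_pos hr
  -- σ commutes with rational smul
  have hsmul : ∀ (c : ℚ) (x : N), σ (c • x) = c • σ x := fun c x =>
    map_rat_smul σ.toAddMonoidHom c x
  -- σ^[k] y₀ = r^k • y₀
  have hy : ∀ k : ℕ, σ^[k] y₀ = r ^ k • y₀ := by
    intro k
    induction k with
    | zero => simp
    | succ k ih =>
      rw [Function.iterate_succ_apply', ih, hsmul, hσy, smul_smul, pow_succ, mul_comm]
  -- σ^[k] a = q^k • a
  have haq : ∀ k : ℕ, σ^[k] a = q ^ k • a := by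
    intro k
    induction k with
    | zero => simp
    | succ k ih =>
      rw [Function.iterate_succ_apply', ih, hqa k]
  -- key: (q/r)^k • a < y₀ for all k
  have key : ∀ k : ℕ, (q / r) ^ k • a < y₀ := by
    intro k
    have h1 : σ^[k] a < σ^[k] y₀ := (hσ.iterate k) hy₀
    rw [hy, haq] at h1
    have h2 : (r ^ k)⁻¹ • (q ^ k • a) < (r ^ k)⁻¹ • (r ^ k • y₀) :=
      smul_lt_smul_of_pos_left h1 (by positivity)
    rw [smul_smul, smul_smul, inv_mul_cancel₀ (by positivity), one_smul] at h2
    calc (q / r) ^ k • a = ((r ^ k)⁻¹ * q ^ k) • a := by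
          rw [div_pow, div_eq_inv_mul]
      _ < y₀ := h2
  -- choose k with q^L ≤ (q/r)^k
  obtain ⟨k, hk⟩ := pow_unbounded_of_one_lt (q ^ L)
    ((one_lt_div hr0).mpr hrq)
  calc q ^ L • a ≤ (q / r) ^ k • a :=
        smul_le_smul_of_nonneg_right hk.le ha.le
    _ < y₀ := key k
end

section
/- Let G = ⊕_{i∈ω} H_i be an ω-sum of ordered abelian groups, and fix ℓ ∈ ω. For b, c ∈ G define b⁻ (resp. c⁺) as the truncations of b to coordinates < ℓ (resp. of c to coordinates ≥ ℓ), and the hybrid b⁻c⁺ = b⁻ + c⁺. If c > u for every u ∈ U_ℓ = ⊕_{j<ℓ} H_j (and G is 2-divisible so c/2 makes sense), then b⁻c⁺ > c/2 for every b ∈ G. -/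
/-- Reverse lexicographic strict order on ω-indexed families. -/
def revlex {H : ℕ → Type*} [∀ i, LinearOrder (H i)] (f g : ∀ i, H i) : Prop :=
  ∃ k, f k < g k ∧ ∀ j, k < j → f j = g j

/-- In a (2-divisible) ω-sum, if c is greater than every element of
U_ℓ = ⊕_{j<ℓ} H_j, then the hybrid b⁻c⁺ is greater than c/2 for every b. -/
theorem stmt_18 {H : ℕ → Type*} [∀ i, AddCommGroup (H i)] [∀ i, LinearOrder (H i)]
    [∀ i, IsOrderedAddMonoid (H i)]
    (ℓ : ℕ) (b c c2 : ∀ i, H i)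
    (hc2 : ∀ i, c2 i + c2 i = c i)
    (hc : ∀ u : ∀ i, H i, (∀ j, ℓ ≤ j → u j = 0) → revlex u c) :
    revlex c2 (fun i => if i < ℓ then b i else c i) := by
  obtain ⟨k, hk, hkz⟩ := hc (fun _ => 0) (fun _ _ => rfl)
  simp only at hk hkz
  have hk : 0 < c k := hk
  have hkz : ∀ j, k < j → c j = 0 := fun j hj => (hkz j hj).symm
  -- k is the top nonzero coordinate of c, with c k > 0
  have hℓk : ℓ ≤ k := by
    by_contra h
    push_neg at h
    have hsupp : ∀ j, ℓ ≤ j → c j + c j = 0 := by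
      intro j hj
      have : c j = 0 := hkz j (lt_of_lt_of_le h hj)
      simp [this]
    obtain ⟨m, hm, hmz⟩ := hc (fun j => c j + c j) hsupp
    simp only at hm hmz
    rcases lt_trichotomy m k with hmk | hmk | hmk
    · have h1 := hmz k hmk
      have h2 := hkz
      rw [show c k + c k = c k + c k from rfl] at h1
      have : c k + c k = c k := h1
      have : c k = 0 := by
        have := add_right_cancel (a := c k) (b := c k) (c := 0) (by simpa using h1.trans (zero_add (c k)).symm)
        exact this
      exact absurd this (ne_of_gt hk)
    · subst hmk
      have hneg : c m < 0 := by
        have := hm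
        exact neg_of_add_lt_left this
      exact absurd hk (not_lt.mpr hneg.le)
    · have hz := hkz m hmk
      rw [hz] at hm
      simp at hm
  refine ⟨k, ?_, ?_⟩
  · have hne : ¬ k < ℓ := not_lt.mpr hℓk
    simp only [hne, if_false]
    have h2 : 0 < c2 k := by
      by_contra h
      push_neg at h
      have : c2 k + c2 k ≤ 0 := add_nonpos h h
      rw [hc2 k] at this
      exact absurd hk (not_lt.mpr this)
    calc c2 k < c2 k + c2 k := lt_add_of_pos_left _ h2
    _ = c k := hc2 k
  · intro j hj
    have hne : ¬ j < ℓ := not_lt.mpr (le_trans hℓk (le_of_lt hj))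
    simp only [hne, if_false]
    have hcj : c j = 0 := hkz j hj
    have hsum : c2 j + c2 j = 0 := by rw [hc2 j, hcj]
    have hz : c2 j = 0 := by
      rcases lt_trichotomy (c2 j) 0 with h | h | h
      · exact absurd hsum (ne_of_lt (add_neg h h))
      · exact h
      · exact absurd hsum (ne_of_gt (add_pos h h))
    rw [hz, hcj]
end
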